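/- Let d ≥ 1 and let γ : ℝ^d → [0, ∞) be integrable and even (γ(-x) = γ(x)). Let φ(ξ) = (2π)^{-d} ∫_{ℝ^d} γ(x) e^{-i x·ξ} dx (which is a real-valued bounded continuous function by evenness), and assume φ(ξ) ≥ 0 for all ξ ∈ ℝ^d. Then for every s > 0 and every x, y ∈ ℝ^d: (a) ∫_{ℝ^d} e^{-s‖η‖²} φ(η - x) φ(y - η) dη ≤ ∫_{ℝ^d} e^{-s‖η‖²} φ(η)² dη, and (b) ∫_{ℝ^d} e^{-s‖η‖²} φ(η - x) dη ≤ ∫_{ℝ^d} e^{-s‖η‖²} φ(η) dη. -/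

import Mathlib

open MeasureTheory Filter Metric
open scoped Topology

section auxLemmas

variable {d : ℕ} {s : ℝ}

lemma aux_gauss_int (hs : 0 < s) :
    Integrable (fun η : EuclideanSpace ℝ (Fin d) => Real.exp (-s * ‖η‖ ^ 2)) := by
  have h := (GaussianFourier.integrable_cexp_neg_mul_sq_norm_add
    (V := EuclideanSpace ℝ (Fin d)) (b := (s : ℂ)) (by simpa using hs) 0 0).norm
  refine h.congr (Filter.Eventually.of_forall fun η => ?_)
  simp [Complex.norm_exp, ← Complex.ofReal_pow]

lemma aux_int_mul (hs : 0 < s) {f : EuclideanSpace ℝ (Fin d) → ℝ}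
    (hf : Continuous f) (hb : ∀ x, |f x| ≤ 1) :
    Integrable (fun η : EuclideanSpace ℝ (Fin d) => Real.exp (-s * ‖η‖ ^ 2) * f η) := by
  refine (aux_gauss_int hs).mono'
    (((Real.continuous_exp.comp (continuous_const.mul (continuous_norm.pow 2))).mul
      hf).aestronglyMeasurable) ?_
  filter_upwards with η
  rw [Real.norm_eq_abs, abs_mul, abs_of_pos (Real.exp_pos _)]
  exact mul_le_of_le_one_right (Real.exp_pos _).le (hb η)

lemma aux_Gval (hs : 0 < s) (w : EuclideanSpace ℝ (Fin d)) :
    ∫ η : EuclideanSpace ℝ (Fin d), Real.exp (-s * ‖η‖ ^ 2) * Real.cos (inner ℝ w η : ℝ) =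
      (Real.pi / s) ^ ((d : ℝ) / 2) * Real.exp (-‖w‖ ^ 2 / (4 * s)) := by
  have hsc : 0 < (s : ℂ).re := by simpa using hs
  have key := GaussianFourier.integral_cexp_neg_mul_sq_norm_add
    (V := EuclideanSpace ℝ (Fin d)) hsc (-Complex.I) w
  have hint := GaussianFourier.integrable_cexp_neg_mul_sq_norm_add
    (V := EuclideanSpace ℝ (Fin d)) hsc (-Complex.I) w
  have h1 : ∫ η : EuclideanSpace ℝ (Fin d), Real.exp (-s * ‖η‖ ^ 2) * Real.cos (inner ℝ w η : ℝ)
      = (∫ η : EuclideanSpace ℝ (Fin d),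
          Complex.exp (-(s : ℂ) * (‖η‖ : ℂ) ^ 2 + (-Complex.I) * ((inner ℝ w η : ℝ) : ℂ))).re := by
    rw [← RCLike.re_to_complex, ← integral_re hint]
    congr 1
    ext η
    rw [RCLike.re_to_complex]
    rw [show -(s : ℂ) * (‖η‖ : ℂ) ^ 2 + (-Complex.I) * ((inner ℝ w η : ℝ) : ℂ)
        = ((-s * ‖η‖ ^ 2 : ℝ) : ℂ) + ((-(inner ℝ w η : ℝ) : ℝ) : ℂ) * Complex.I by
      push_cast; ring]
    rw [Complex.exp_add, ← Complex.ofReal_exp, Complex.re_ofReal_mul,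
      Complex.exp_ofReal_mul_I_re, Real.cos_neg]
  rw [h1, key]
  have hπs : (0:ℝ) ≤ Real.pi / s := le_of_lt (div_pos Real.pi_pos hs)
  have h2 : ((Real.pi : ℂ) / (s : ℂ)) ^ ((Module.finrank ℝ (EuclideanSpace ℝ (Fin d))) / 2 : ℂ)
      = (((Real.pi / s) ^ ((d : ℝ) / 2) : ℝ) : ℂ) := by
    rw [Complex.ofReal_cpow hπs]
    push_cast [finrank_euclideanSpace_fin]
    ring_nf
  have h3 : (-Complex.I) ^ 2 * (‖w‖ : ℂ) ^ 2 / (4 * (s : ℂ))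
      = ((-‖w‖ ^ 2 / (4 * s) : ℝ) : ℂ) := by
    rw [neg_pow, Complex.I_sq]
    push_cast
    ring
  rw [h2, h3, ← Complex.ofReal_exp, ← Complex.ofReal_mul, Complex.ofReal_re]

lemma aux_Gcos (hs : 0 < s) (w : EuclideanSpace ℝ (Fin d)) (θ : ℝ) :
    ∫ η : EuclideanSpace ℝ (Fin d), Real.exp (-s * ‖η‖ ^ 2) * Real.cos ((inner ℝ w η : ℝ) - θ) =
      Real.cos θ * ((Real.pi / s) ^ ((d : ℝ) / 2) * Real.exp (-‖w‖ ^ 2 / (4 * s))) := by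
  have hcosc : Continuous fun η : EuclideanSpace ℝ (Fin d) => Real.cos (inner ℝ w η : ℝ) :=
    Real.continuous_cos.comp (continuous_const.inner continuous_id)
  have hsinc : Continuous fun η : EuclideanSpace ℝ (Fin d) => Real.sin (inner ℝ w η : ℝ) :=
    Real.continuous_sin.comp (continuous_const.inner continuous_id)
  have hc : Integrable (fun η : EuclideanSpace ℝ (Fin d) =>
      Real.exp (-s * ‖η‖ ^ 2) * Real.cos (inner ℝ w η : ℝ)) :=
    aux_int_mul hs hcosc (fun x => Real.abs_cos_le_one _)
  have hsin : Integrable (fun η : EuclideanSpace ℝ (Fin d) =>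
      Real.exp (-s * ‖η‖ ^ 2) * Real.sin (inner ℝ w η : ℝ)) :=
    aux_int_mul hs hsinc (fun x => Real.abs_sin_le_one _)
  have hzero : ∫ η : EuclideanSpace ℝ (Fin d),
      Real.exp (-s * ‖η‖ ^ 2) * Real.sin (inner ℝ w η : ℝ) = 0 := by
    have h1 := MeasureTheory.integral_neg_eq_self
      (fun η : EuclideanSpace ℝ (Fin d) => Real.exp (-s * ‖η‖ ^ 2) * Real.sin (inner ℝ w η : ℝ))
      volume
    have h2 : ∫ η : EuclideanSpace ℝ (Fin d),
        Real.exp (-s * ‖(-η)‖ ^ 2) * Real.sin (inner ℝ w (-η) : ℝ)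
        = ∫ η : EuclideanSpace ℝ (Fin d),
          -(Real.exp (-s * ‖η‖ ^ 2) * Real.sin (inner ℝ w η : ℝ)) := by
      congr 1; ext η; rw [norm_neg, inner_neg_right, Real.sin_neg]; ring
    rw [h2, integral_neg] at h1
    linarith
  calc ∫ η : EuclideanSpace ℝ (Fin d), Real.exp (-s * ‖η‖ ^ 2) * Real.cos ((inner ℝ w η : ℝ) - θ)
      = ∫ η : EuclideanSpace ℝ (Fin d),
          (Real.cos θ * (Real.exp (-s * ‖η‖ ^ 2) * Real.cos (inner ℝ w η : ℝ))
            + Real.sin θ * (Real.exp (-s * ‖η‖ ^ 2) * Real.sin (inner ℝ w η : ℝ))) := by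
        congr 1; ext η; rw [Real.cos_sub]; ring
    _ = Real.cos θ * ∫ η : EuclideanSpace ℝ (Fin d),
          Real.exp (-s * ‖η‖ ^ 2) * Real.cos (inner ℝ w η : ℝ) := by
        rw [integral_add (hc.const_mul _) (hsin.const_mul _), integral_const_mul,
          integral_const_mul, hzero]
        ring
    _ = _ := by rw [aux_Gval hs w]

lemma aux_b (hs : 0 < s) (γ : EuclideanSpace ℝ (Fin d) → ℝ) (hγint : Integrable γ)
    (x : EuclideanSpace ℝ (Fin d)) :
    (∫ η : EuclideanSpace ℝ (Fin d), Real.exp (-s * ‖η‖ ^ 2) *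
        ∫ u, γ u * Real.cos ((inner ℝ u η : ℝ) - (inner ℝ u x : ℝ)))
      = (∫ u : EuclideanSpace ℝ (Fin d), γ u * (Real.cos (inner ℝ u x : ℝ) *
          ((Real.pi / s) ^ ((d : ℝ) / 2) * Real.exp (-‖u‖ ^ 2 / (4 * s)))))
    ∧ Integrable (fun u : EuclideanSpace ℝ (Fin d) => γ u * (Real.cos (inner ℝ u x : ℝ) *
        ((Real.pi / s) ^ ((d : ℝ) / 2) * Real.exp (-‖u‖ ^ 2 / (4 * s))))) := by
  set Q : EuclideanSpace ℝ (Fin d) × EuclideanSpace ℝ (Fin d) → ℝ := fun z =>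
    Real.exp (-s * ‖z.1‖ ^ 2) * (γ z.2 * Real.cos ((inner ℝ z.2 z.1 : ℝ) - (inner ℝ z.2 x : ℝ)))
    with hQ
  have hgc : Continuous fun η : EuclideanSpace ℝ (Fin d) => Real.exp (-s * ‖η‖ ^ 2) :=
    Real.continuous_exp.comp (continuous_const.mul (continuous_norm.pow 2))
  have hQm : AEStronglyMeasurable Q (volume.prod volume) := by
    refine ((hgc.comp continuous_fst).aestronglyMeasurable).mul (hγint.1.comp_snd.mul ?_)
    exact (Real.continuous_cos.comp
      ((continuous_snd.inner continuous_fst).sub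
        (continuous_snd.inner continuous_const))).aestronglyMeasurable
  have hQint : Integrable Q (volume.prod volume) := by
    refine Integrable.mono' ((aux_gauss_int hs).mul_prod hγint.norm) hQm ?_
    filter_upwards with z
    rw [Real.norm_eq_abs, hQ]
    simp only
    rw [abs_mul, abs_mul, abs_of_pos (Real.exp_pos _)]
    refine mul_le_mul_of_nonneg_left ?_ (Real.exp_pos _).le
    exact mul_le_of_le_one_right (abs_nonneg _) (Real.abs_cos_le_one _)
  have h3 : ∀ u : EuclideanSpace ℝ (Fin d), (∫ η, Q (η, u))
      = γ u * (Real.cos (inner ℝ u x : ℝ) *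
          ((Real.pi / s) ^ ((d : ℝ) / 2) * Real.exp (-‖u‖ ^ 2 / (4 * s)))) := by
    intro u
    have : ∀ η : EuclideanSpace ℝ (Fin d), Q (η, u)
        = γ u * (Real.exp (-s * ‖η‖ ^ 2) * Real.cos ((inner ℝ u η : ℝ) - (inner ℝ u x : ℝ))) := by
      intro η; rw [hQ]; ring
    simp_rw [this]
    rw [integral_const_mul, aux_Gcos hs u (inner ℝ u x : ℝ)]
  constructor
  · calc (∫ η : EuclideanSpace ℝ (Fin d), Real.exp (-s * ‖η‖ ^ 2) *
        ∫ u, γ u * Real.cos ((inner ℝ u η : ℝ) - (inner ℝ u x : ℝ)))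
        = ∫ η, ∫ u, Q (η, u) := by
          congr 1; ext η; rw [← integral_const_mul]
      _ = ∫ u, ∫ η, Q (η, u) := integral_integral_swap hQint
      _ = _ := by congr 1; ext u; exact h3 u
  · have := (hQint.swap).integral_prod_left
    refine this.congr (Filter.Eventually.of_forall fun u => ?_)
    simpa using h3 u

lemma aux_a (hs : 0 < s) (γ : EuclideanSpace ℝ (Fin d) → ℝ) (hγint : Integrable γ)
    (x y : EuclideanSpace ℝ (Fin d)) :
    (∫ η : EuclideanSpace ℝ (Fin d), Real.exp (-s * ‖η‖ ^ 2) *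
        ((∫ u, γ u * Real.cos ((inner ℝ u η : ℝ) - (inner ℝ u x : ℝ))) *
         (∫ v, γ v * Real.cos ((inner ℝ v η : ℝ) - (inner ℝ v y : ℝ)))))
      = (∫ p : EuclideanSpace ℝ (Fin d) × EuclideanSpace ℝ (Fin d),
          γ p.1 * γ p.2 *
            ((Real.cos ((inner ℝ p.1 x : ℝ) + (inner ℝ p.2 y : ℝ)) *
                ((Real.pi / s) ^ ((d : ℝ) / 2) * Real.exp (-‖p.1 + p.2‖ ^ 2 / (4 * s)))
              + Real.cos ((inner ℝ p.1 x : ℝ) - (inner ℝ p.2 y : ℝ)) *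
                ((Real.pi / s) ^ ((d : ℝ) / 2) * Real.exp (-‖p.1 - p.2‖ ^ 2 / (4 * s)))) / 2)
          ∂((volume : Measure (EuclideanSpace ℝ (Fin d))).prod volume))
    ∧ Integrable (fun p : EuclideanSpace ℝ (Fin d) × EuclideanSpace ℝ (Fin d) =>
          γ p.1 * γ p.2 *
            ((Real.cos ((inner ℝ p.1 x : ℝ) + (inner ℝ p.2 y : ℝ)) *
                ((Real.pi / s) ^ ((d : ℝ) / 2) * Real.exp (-‖p.1 + p.2‖ ^ 2 / (4 * s)))
              + Real.cos ((inner ℝ p.1 x : ℝ) - (inner ℝ p.2 y : ℝ)) *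
                ((Real.pi / s) ^ ((d : ℝ) / 2) * Real.exp (-‖p.1 - p.2‖ ^ 2 / (4 * s)))) / 2))
      ((volume : Measure (EuclideanSpace ℝ (Fin d))).prod volume) := by
  set Q : EuclideanSpace ℝ (Fin d) × (EuclideanSpace ℝ (Fin d) × EuclideanSpace ℝ (Fin d)) → ℝ :=
    fun z => Real.exp (-s * ‖z.1‖ ^ 2) *
      ((γ z.2.1 * Real.cos ((inner ℝ z.2.1 z.1 : ℝ) - (inner ℝ z.2.1 x : ℝ))) *
       (γ z.2.2 * Real.cos ((inner ℝ z.2.2 z.1 : ℝ) - (inner ℝ z.2.2 y : ℝ)))) with hQ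
  have hgc : Continuous fun η : EuclideanSpace ℝ (Fin d) => Real.exp (-s * ‖η‖ ^ 2) :=
    Real.continuous_exp.comp (continuous_const.mul (continuous_norm.pow 2))
  have hc1 : Continuous (fun z : EuclideanSpace ℝ (Fin d) ×
      (EuclideanSpace ℝ (Fin d) × EuclideanSpace ℝ (Fin d)) =>
      Real.cos ((inner ℝ z.2.1 z.1 : ℝ) - (inner ℝ z.2.1 x : ℝ))) :=
    Real.continuous_cos.comp
      (((continuous_fst.comp continuous_snd).inner continuous_fst).sub
        ((continuous_fst.comp continuous_snd).inner continuous_const))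
  have hc2 : Continuous (fun z : EuclideanSpace ℝ (Fin d) ×
      (EuclideanSpace ℝ (Fin d) × EuclideanSpace ℝ (Fin d)) =>
      Real.cos ((inner ℝ z.2.2 z.1 : ℝ) - (inner ℝ z.2.2 y : ℝ))) :=
    Real.continuous_cos.comp
      (((continuous_snd.comp continuous_snd).inner continuous_fst).sub
        ((continuous_snd.comp continuous_snd).inner continuous_const))
  have hQm : AEStronglyMeasurable Q ((volume : Measure (EuclideanSpace ℝ (Fin d))).prod
      ((volume : Measure (EuclideanSpace ℝ (Fin d))).prod volume)) :=
    ((hgc.comp continuous_fst).aestronglyMeasurable).mul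
      ((hγint.1.comp_fst.comp_snd.mul hc1.aestronglyMeasurable).mul
        (hγint.1.comp_snd.comp_snd.mul hc2.aestronglyMeasurable))
  have hQint : Integrable Q ((volume : Measure (EuclideanSpace ℝ (Fin d))).prod
      ((volume : Measure (EuclideanSpace ℝ (Fin d))).prod volume)) := by
    refine Integrable.mono' ((aux_gauss_int hs).mul_prod (hγint.norm.mul_prod hγint.norm))
      hQm ?_
    filter_upwards with z
    rw [Real.norm_eq_abs, hQ]
    simp only
    rw [abs_mul, abs_of_pos (Real.exp_pos _)]
    refine mul_le_mul_of_nonneg_left ?_ (Real.exp_pos _).le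
    rw [abs_mul, abs_mul, abs_mul]
    refine mul_le_mul ?_ ?_ (by positivity) (abs_nonneg _)
    · exact mul_le_of_le_one_right (abs_nonneg _) (Real.abs_cos_le_one _)
    · exact mul_le_of_le_one_right (abs_nonneg _) (Real.abs_cos_le_one _)
  have trig : ∀ A B : ℝ, Real.cos A * Real.cos B = (Real.cos (A + B) + Real.cos (A - B)) / 2 := by
    intro A B; rw [Real.cos_add, Real.cos_sub]; ring
  have h3 : ∀ p : EuclideanSpace ℝ (Fin d) × EuclideanSpace ℝ (Fin d),
      (∫ η, Q (η, p)) = γ p.1 * γ p.2 *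
        ((Real.cos ((inner ℝ p.1 x : ℝ) + (inner ℝ p.2 y : ℝ)) *
            ((Real.pi / s) ^ ((d : ℝ) / 2) * Real.exp (-‖p.1 + p.2‖ ^ 2 / (4 * s)))
          + Real.cos ((inner ℝ p.1 x : ℝ) - (inner ℝ p.2 y : ℝ)) *
            ((Real.pi / s) ^ ((d : ℝ) / 2) * Real.exp (-‖p.1 - p.2‖ ^ 2 / (4 * s)))) / 2) := by
    rintro ⟨u, v⟩
    have e1 : ∀ η : EuclideanSpace ℝ (Fin d),
        ((inner ℝ u η : ℝ) - (inner ℝ u x : ℝ)) + ((inner ℝ v η : ℝ) - (inner ℝ v y : ℝ))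
          = (inner ℝ (u + v) η : ℝ) - ((inner ℝ u x : ℝ) + (inner ℝ v y : ℝ)) := by
      intro η; rw [inner_add_left]; ring
    have e2 : ∀ η : EuclideanSpace ℝ (Fin d),
        ((inner ℝ u η : ℝ) - (inner ℝ u x : ℝ)) - ((inner ℝ v η : ℝ) - (inner ℝ v y : ℝ))
          = (inner ℝ (u - v) η : ℝ) - ((inner ℝ u x : ℝ) - (inner ℝ v y : ℝ)) := by
      intro η; rw [inner_sub_left]; ring
    have key : ∀ η : EuclideanSpace ℝ (Fin d), Q (η, (u, v))
        = γ u * γ v * ((1/2) * (Real.exp (-s * ‖η‖ ^ 2) *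
              Real.cos ((inner ℝ (u + v) η : ℝ) - ((inner ℝ u x : ℝ) + (inner ℝ v y : ℝ))))
          + (1/2) * (Real.exp (-s * ‖η‖ ^ 2) *
              Real.cos ((inner ℝ (u - v) η : ℝ) - ((inner ℝ u x : ℝ) - (inner ℝ v y : ℝ))))) := by
      intro η
      rw [hQ]
      simp only
      rw [show (γ u * Real.cos ((inner ℝ u η : ℝ) - (inner ℝ u x : ℝ))) *
            (γ v * Real.cos ((inner ℝ v η : ℝ) - (inner ℝ v y : ℝ)))
          = γ u * γ v * (Real.cos ((inner ℝ u η : ℝ) - (inner ℝ u x : ℝ)) *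
              Real.cos ((inner ℝ v η : ℝ) - (inner ℝ v y : ℝ))) by ring,
        trig, e1 η, e2 η]
      ring
    simp_rw [key]
    have hic : ∀ (w : EuclideanSpace ℝ (Fin d)) (θ : ℝ),
        Integrable (fun η : EuclideanSpace ℝ (Fin d) =>
          Real.exp (-s * ‖η‖ ^ 2) * Real.cos ((inner ℝ w η : ℝ) - θ)) := by
      intro w θ
      refine aux_int_mul hs ?_ (fun x => Real.abs_cos_le_one _)
      exact Real.continuous_cos.comp ((continuous_const.inner continuous_id).sub
        continuous_const)
    rw [integral_const_mul, integral_add ((hic _ _).const_mul _) ((hic _ _).const_mul _),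
      integral_const_mul, integral_const_mul, aux_Gcos hs, aux_Gcos hs]
    ring
  constructor
  · calc (∫ η : EuclideanSpace ℝ (Fin d), Real.exp (-s * ‖η‖ ^ 2) *
        ((∫ u, γ u * Real.cos ((inner ℝ u η : ℝ) - (inner ℝ u x : ℝ))) *
         (∫ v, γ v * Real.cos ((inner ℝ v η : ℝ) - (inner ℝ v y : ℝ)))))
        = ∫ η, ∫ p : EuclideanSpace ℝ (Fin d) × EuclideanSpace ℝ (Fin d), Q (η, p)
            ∂((volume : Measure (EuclideanSpace ℝ (Fin d))).prod volume) := by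
          congr 1; ext η
          rw [← integral_prod_mul, ← integral_const_mul]
      _ = ∫ p : EuclideanSpace ℝ (Fin d) × EuclideanSpace ℝ (Fin d), (∫ η, Q (η, p))
            ∂((volume : Measure (EuclideanSpace ℝ (Fin d))).prod volume) :=
          integral_integral_swap hQint
      _ = _ := by
          refine integral_congr_ae (Filter.Eventually.of_forall fun p => ?_)
          exact h3 p
  · have := (hQint.swap).integral_prod_left
    refine this.congr (Filter.Eventually.of_forall fun p => ?_)
    simpa using h3 p

end auxLemmas

/-- Let `γ : ℝ^d → [0,∞)` be integrable and even, and let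
`φ(ξ) = (2π)^{-d} ∫ γ(x) e^{-i x·ξ} dx` (real-valued by evenness; here its real part).
If `φ ≥ 0`, then for every `s > 0` and `x, y ∈ ℝ^d`:
(a) `∫ e^{-s‖η‖²} φ(η-x) φ(y-η) dη ≤ ∫ e^{-s‖η‖²} φ(η)² dη`, and
(b) `∫ e^{-s‖η‖²} φ(η-x) dη ≤ ∫ e^{-s‖η‖²} φ(η) dη`. -/
theorem stmt_15 (d : ℕ) (hd : 1 ≤ d)
    (γ : EuclideanSpace ℝ (Fin d) → ℝ) (hγint : Integrable γ)
    (hγ0 : ∀ x, 0 ≤ γ x) (hγeven : ∀ x, γ (-x) = γ x) :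
    let φ : EuclideanSpace ℝ (Fin d) → ℝ := fun ξ =>
      (2 * Real.pi) ^ (-(d : ℝ)) *
        (∫ x, (γ x : ℂ) * Complex.exp (-Complex.I * ((inner ℝ x ξ : ℝ) : ℂ))).re
    (∀ ξ, 0 ≤ φ ξ) →
      ∀ s : ℝ, 0 < s → ∀ x y : EuclideanSpace ℝ (Fin d),
        (∫ η, Real.exp (-s * ‖η‖ ^ 2) * φ (η - x) * φ (y - η) ≤
          ∫ η, Real.exp (-s * ‖η‖ ^ 2) * φ η ^ 2) ∧
        (∫ η, Real.exp (-s * ‖η‖ ^ 2) * φ (η - x) ≤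
          ∫ η, Real.exp (-s * ‖η‖ ^ 2) * φ η) := by
  intro φ hφ s hs x y
  set c : ℝ := (2 * Real.pi) ^ (-(d : ℝ)) with hcdef
  have hc : 0 ≤ c := by
    rw [hcdef]
    positivity
  -- φ in terms of a real cosine integral
  have hφcos : ∀ ξ, φ ξ = c * ∫ u, γ u * Real.cos (inner ℝ u ξ : ℝ) := by
    intro ξ
    have hcont : Continuous (fun u : EuclideanSpace ℝ (Fin d) =>
        Complex.exp (-Complex.I * ((inner ℝ u ξ : ℝ) : ℂ))) :=
      Complex.continuous_exp.comp (continuous_const.mul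
        (Complex.continuous_ofReal.comp (continuous_id.inner continuous_const)))
    have hnorm : ∀ u : EuclideanSpace ℝ (Fin d),
        ‖(γ u : ℂ) * Complex.exp (-Complex.I * ((inner ℝ u ξ : ℝ) : ℂ))‖ = ‖γ u‖ := by
      intro u
      rw [norm_mul]
      simp [Complex.norm_exp]
    have hintC : Integrable (fun u : EuclideanSpace ℝ (Fin d) =>
        (γ u : ℂ) * Complex.exp (-Complex.I * ((inner ℝ u ξ : ℝ) : ℂ))) := by
      refine Integrable.mono' hγint.norm
        ((Complex.continuous_ofReal.comp_aestronglyMeasurable hγint.1).mul hcont.aestronglyMeasurable) ?_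
      filter_upwards with u
      rw [hnorm u]
    show c * (∫ u, (γ u : ℂ) * Complex.exp (-Complex.I * ((inner ℝ u ξ : ℝ) : ℂ))).re
      = c * ∫ u, γ u * Real.cos (inner ℝ u ξ : ℝ)
    congr 1
    rw [← RCLike.re_to_complex, ← integral_re hintC]
    congr 1
    ext u
    rw [RCLike.re_to_complex,
      show -Complex.I * ((inner ℝ u ξ : ℝ) : ℂ) = ((-(inner ℝ u ξ : ℝ) : ℝ) : ℂ) * Complex.I by
        push_cast; ring,
      Complex.re_ofReal_mul, Complex.exp_ofReal_mul_I_re, Real.cos_neg]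
  obtain ⟨hB1, hI1⟩ := aux_b hs γ hγint x
  obtain ⟨hB0, hI0⟩ := aux_b hs γ hγint 0
  simp only [inner_zero_right, sub_zero, Real.cos_zero, one_mul] at hB0 hI0
  obtain ⟨hA1, hIA1⟩ := aux_a hs γ hγint x y
  obtain ⟨hA0, hIA0⟩ := aux_a hs γ hγint 0 0
  simp only [inner_zero_right, sub_zero, add_zero, Real.cos_zero, one_mul] at hA0 hIA0
  have hGpos : ∀ w : EuclideanSpace ℝ (Fin d),
      (0:ℝ) ≤ (Real.pi / s) ^ ((d : ℝ) / 2) * Real.exp (-‖w‖ ^ 2 / (4 * s)) := by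
    intro w
    have := Real.pi_pos
    positivity
  constructor
  · -- part (a)
    calc ∫ η, Real.exp (-s * ‖η‖ ^ 2) * φ (η - x) * φ (y - η)
        = c ^ 2 * ∫ η : EuclideanSpace ℝ (Fin d), Real.exp (-s * ‖η‖ ^ 2) *
            ((∫ u, γ u * Real.cos ((inner ℝ u η : ℝ) - (inner ℝ u x : ℝ))) *
             (∫ v, γ v * Real.cos ((inner ℝ v η : ℝ) - (inner ℝ v y : ℝ)))) := by
          rw [← integral_const_mul]
          congr 1
          ext η
          have e1 : (∫ u, γ u * Real.cos (inner ℝ u (η - x) : ℝ))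
              = ∫ u, γ u * Real.cos ((inner ℝ u η : ℝ) - (inner ℝ u x : ℝ)) := by
            congr 1; ext u; rw [inner_sub_right]
          have e2 : (∫ v, γ v * Real.cos (inner ℝ v (y - η) : ℝ))
              = ∫ v, γ v * Real.cos ((inner ℝ v η : ℝ) - (inner ℝ v y : ℝ)) := by
            congr 1; ext v
            rw [inner_sub_right, show (inner ℝ v y : ℝ) - (inner ℝ v η : ℝ)
              = -((inner ℝ v η : ℝ) - (inner ℝ v y : ℝ)) by ring, Real.cos_neg]
          rw [hφcos (η - x), hφcos (y - η), e1, e2]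
          ring
      _ = c ^ 2 * ∫ p : EuclideanSpace ℝ (Fin d) × EuclideanSpace ℝ (Fin d),
            γ p.1 * γ p.2 *
              ((Real.cos ((inner ℝ p.1 x : ℝ) + (inner ℝ p.2 y : ℝ)) *
                  ((Real.pi / s) ^ ((d : ℝ) / 2) * Real.exp (-‖p.1 + p.2‖ ^ 2 / (4 * s)))
                + Real.cos ((inner ℝ p.1 x : ℝ) - (inner ℝ p.2 y : ℝ)) *
                  ((Real.pi / s) ^ ((d : ℝ) / 2) * Real.exp (-‖p.1 - p.2‖ ^ 2 / (4 * s)))) / 2)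
            ∂((volume : Measure (EuclideanSpace ℝ (Fin d))).prod volume) := by
          rw [hA1]
      _ ≤ c ^ 2 * ∫ p : EuclideanSpace ℝ (Fin d) × EuclideanSpace ℝ (Fin d),
            γ p.1 * γ p.2 *
              (((Real.pi / s) ^ ((d : ℝ) / 2) * Real.exp (-‖p.1 + p.2‖ ^ 2 / (4 * s))
                + (Real.pi / s) ^ ((d : ℝ) / 2) * Real.exp (-‖p.1 - p.2‖ ^ 2 / (4 * s))) / 2)
            ∂((volume : Measure (EuclideanSpace ℝ (Fin d))).prod volume) := by
          refine mul_le_mul_of_nonneg_left (integral_mono hIA1 hIA0 fun p => ?_) (by positivity)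
          have hγγ : (0:ℝ) ≤ γ p.1 * γ p.2 := mul_nonneg (hγ0 _) (hγ0 _)
          refine mul_le_mul_of_nonneg_left ?_ hγγ
          refine (div_le_div_iff_of_pos_right (by norm_num : (0:ℝ) < 2)).mpr ?_
          exact add_le_add
            (mul_le_of_le_one_left (hGpos _) (Real.cos_le_one _))
            (mul_le_of_le_one_left (hGpos _) (Real.cos_le_one _))
      _ = ∫ η, Real.exp (-s * ‖η‖ ^ 2) * φ η ^ 2 := by
          rw [← hA0, ← integral_const_mul]
          congr 1
          ext η
          rw [hφcos η]
          ring
  · -- part (b)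
    calc ∫ η, Real.exp (-s * ‖η‖ ^ 2) * φ (η - x)
        = c * ∫ η : EuclideanSpace ℝ (Fin d), Real.exp (-s * ‖η‖ ^ 2) *
            ∫ u, γ u * Real.cos ((inner ℝ u η : ℝ) - (inner ℝ u x : ℝ)) := by
          rw [← integral_const_mul]
          congr 1
          ext η
          have e1 : (∫ u, γ u * Real.cos (inner ℝ u (η - x) : ℝ))
              = ∫ u, γ u * Real.cos ((inner ℝ u η : ℝ) - (inner ℝ u x : ℝ)) := by
            congr 1; ext u; rw [inner_sub_right]
          rw [hφcos (η - x), e1]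
          ring
      _ = c * ∫ u : EuclideanSpace ℝ (Fin d), γ u * (Real.cos (inner ℝ u x : ℝ) *
            ((Real.pi / s) ^ ((d : ℝ) / 2) * Real.exp (-‖u‖ ^ 2 / (4 * s)))) := by
          rw [hB1]
      _ ≤ c * ∫ u : EuclideanSpace ℝ (Fin d), γ u *
            ((Real.pi / s) ^ ((d : ℝ) / 2) * Real.exp (-‖u‖ ^ 2 / (4 * s))) := by
          refine mul_le_mul_of_nonneg_left (integral_mono hI1 hI0 fun u => ?_) hc
          exact mul_le_mul_of_nonneg_left
            (mul_le_of_le_one_left (hGpos u) (Real.cos_le_one _)) (hγ0 u)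
      _ = ∫ η, Real.exp (-s * ‖η‖ ^ 2) * φ η := by
          rw [← hB0, ← integral_const_mul]
          congr 1
          ext η
          rw [hφcos η]
          ring
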